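/- Let A = (V, μ) be a finite-dimensional anti-commutative algebra over a field K of characteristic zero. The linear map φ defined by φ(A,B,C) = ((A, ½(B+C)), ½(B−C)) is a linear isomorphism from Der₀(A) = {(A,B,C) ∈ End(V)³ : Aμ(X,Y) = μ(BX,Y) + μ(X,CY) for all X,Y} onto NDer(A) × QC(A), with inverse ((P,Q), R) ↦ (P, Q+R, Q−R). -/

import Mathlib

theorem stmt1 {K V : Type*} [Field K] [CharZero K] [AddCommGroup V] [Module K V]
    [FiniteDimensional K V] (μ : V →ₗ[K] V →ₗ[K] V)
    (hanti : ∀ X Y : V, μ X Y = - μ Y X) :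
    Set.BijOn
      (fun t : Module.End K V × Module.End K V × Module.End K V =>
        ((t.1, (2:K)⁻¹ • (t.2.1 + t.2.2)), (2:K)⁻¹ • (t.2.1 - t.2.2)))
      {t : Module.End K V × Module.End K V × Module.End K V |
        ∀ X Y : V, t.1 (μ X Y) = μ (t.2.1 X) Y + μ X (t.2.2 Y)}
      (({p : Module.End K V × Module.End K V |
          ∀ X Y : V, p.1 (μ X Y) = μ (p.2 X) Y + μ X (p.2 Y)} ×ˢ
        {R : Module.End K V | ∀ X Y : V, μ (R X) Y = μ X (R Y)})) ∧
    Set.InvOn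
      (fun p : (Module.End K V × Module.End K V) × Module.End K V =>
        (p.1.1, p.1.2 + p.2, p.1.2 - p.2))
      (fun t : Module.End K V × Module.End K V × Module.End K V =>
        ((t.1, (2:K)⁻¹ • (t.2.1 + t.2.2)), (2:K)⁻¹ • (t.2.1 - t.2.2)))
      {t : Module.End K V × Module.End K V × Module.End K V |
        ∀ X Y : V, t.1 (μ X Y) = μ (t.2.1 X) Y + μ X (t.2.2 Y)}
      (({p : Module.End K V × Module.End K V |
          ∀ X Y : V, p.1 (μ X Y) = μ (p.2 X) Y + μ X (p.2 Y)} ×ˢ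
        {R : Module.End K V | ∀ X Y : V, μ (R X) Y = μ X (R Y)})) := by
  have h2 : (2:K) ≠ 0 := two_ne_zero
  -- inverse identities hold globally
  have hinv : Set.InvOn
      (fun p : (Module.End K V × Module.End K V) × Module.End K V =>
        (p.1.1, p.1.2 + p.2, p.1.2 - p.2))
      (fun t : Module.End K V × Module.End K V × Module.End K V =>
        ((t.1, (2:K)⁻¹ • (t.2.1 + t.2.2)), (2:K)⁻¹ • (t.2.1 - t.2.2)))
      {t : Module.End K V × Module.End K V × Module.End K V |
        ∀ X Y : V, t.1 (μ X Y) = μ (t.2.1 X) Y + μ X (t.2.2 Y)}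
      (({p : Module.End K V × Module.End K V |
          ∀ X Y : V, p.1 (μ X Y) = μ (p.2 X) Y + μ X (p.2 Y)} ×ˢ
        {R : Module.End K V | ∀ X Y : V, μ (R X) Y = μ X (R Y)})) := by
    constructor
    · rintro ⟨A, B, C⟩ -
      refine Prod.ext rfl (Prod.ext ?_ ?_) <;> simp only <;> ext v <;>
        simp only [LinearMap.add_apply, LinearMap.sub_apply, LinearMap.smul_apply] <;>
        match_scalars <;> field_simp <;> ring
    · rintro ⟨⟨P, Q⟩, R⟩ -
      refine Prod.ext (Prod.ext rfl ?_) ?_ <;> simp only <;> ext v <;>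
        simp only [LinearMap.add_apply, LinearMap.sub_apply, LinearMap.smul_apply] <;>
        match_scalars <;> field_simp <;> ring
  -- forward MapsTo
  have hmt1 : Set.MapsTo
      (fun t : Module.End K V × Module.End K V × Module.End K V =>
        ((t.1, (2:K)⁻¹ • (t.2.1 + t.2.2)), (2:K)⁻¹ • (t.2.1 - t.2.2)))
      {t : Module.End K V × Module.End K V × Module.End K V |
        ∀ X Y : V, t.1 (μ X Y) = μ (t.2.1 X) Y + μ X (t.2.2 Y)}
      (({p : Module.End K V × Module.End K V |
          ∀ X Y : V, p.1 (μ X Y) = μ (p.2 X) Y + μ X (p.2 Y)} ×ˢ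
        {R : Module.End K V | ∀ X Y : V, μ (R X) Y = μ X (R Y)})) := by
    rintro ⟨A, B, C⟩ ht
    have ht' : ∀ X Y : V, A (μ X Y) = μ (C X) Y + μ X (B Y) := by
      intro X Y
      have h1 := ht Y X
      rw [hanti Y X, hanti (B Y) X, hanti Y (C X)] at h1
      simp only [map_neg] at h1
      have h2' := congrArg Neg.neg h1
      simp only [neg_neg, neg_add] at h2'
      rw [h2']; abel
    constructor
    · intro X Y
      have e1 := ht X Y
      have e2 := ht' X Y
      simp only [Set.mem_setOf_eq] at e1 ⊢
      simp only [LinearMap.smul_apply, LinearMap.add_apply, map_add, map_smul]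
      linear_combination (norm := module) (2:K)⁻¹ • e1 + (2:K)⁻¹ • e2
    · intro X Y
      have e1 := ht X Y
      have e1' := ht Y X
      have e2 := ht' X Y
      have e2' := ht' Y X
      simp only [Set.mem_setOf_eq] at e1 e1' ⊢
      simp only [LinearMap.smul_apply, LinearMap.sub_apply, map_add, map_sub, map_smul]
      linear_combination (norm := module) (2:K)⁻¹ • e2 - (2:K)⁻¹ • e1
  -- backward MapsTo
  have hmt2 : Set.MapsTo
      (fun p : (Module.End K V × Module.End K V) × Module.End K V =>
        (p.1.1, p.1.2 + p.2, p.1.2 - p.2))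
      (({p : Module.End K V × Module.End K V |
          ∀ X Y : V, p.1 (μ X Y) = μ (p.2 X) Y + μ X (p.2 Y)} ×ˢ
        {R : Module.End K V | ∀ X Y : V, μ (R X) Y = μ X (R Y)}))
      {t : Module.End K V × Module.End K V × Module.End K V |
        ∀ X Y : V, t.1 (μ X Y) = μ (t.2.1 X) Y + μ X (t.2.2 Y)} := by
    rintro ⟨⟨P, Q⟩, R⟩ ⟨hP, hR⟩ X Y
    simp only [LinearMap.add_apply, LinearMap.sub_apply, map_add, map_sub] at *
    rw [hP X Y, hR X Y]; abel
  exact ⟨hinv.bijOn hmt1 hmt2, hinv⟩
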